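/- With p_n defined by p_1(x)=0, p_2(x)=x/15, and (2n+1)p_n(x)=(2n-3)p_{n-1}(x)-(x/(2n-1))p_{n-2}(x), the infinite series ∑_{n=2}^∞ p_n(π²) converges and equals 1. -/

import Mathlib

open Real

/-- `p_n(x)` defined by the recurrence
`(2n+1) p_n(x) = (2n-3) p_{n-1}(x) - (x/(2n-1)) p_{n-2}(x)` for `n ≥ 3`,
with `p_1(x) = 0` and `p_2(x) = x/15`. -/
noncomputable def p : ℕ → ℝ → ℝ
  | 0, _ => 0
  | 1, _ => 0
  | 2, x => x / 15
  | (n+3), x =>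
      ((2*((n : ℝ)+3)-3) * p (n+2) x - (x / (2*((n : ℝ)+3)-1)) * p (n+1) x) / (2*((n : ℝ)+3)+1)

/-- Double factorial `(2m+1)!!` as a real number. -/
noncomputable def auxD : ℕ → ℝ
  | 0 => 1
  | (m+1) => (2*(m : ℝ)+3) * auxD m

lemma auxD_pos (m : ℕ) : 0 < auxD m := by
  induction m with
  | zero => norm_num [auxD]
  | succ m ih => rw [auxD]; positivity

lemma one_le_auxD (m : ℕ) : 1 ≤ auxD m := by
  induction m with
  | zero => norm_num [auxD]
  | succ m ih => rw [auxD]; nlinarith [ih]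

lemma auxD_fac (k : ℕ) : (2:ℝ)^k * (k.factorial : ℝ) * auxD k = ((2*k+1).factorial : ℝ) := by
  induction k with
  | zero => norm_num [auxD]
  | succ k ih =>
    have h : 2*(k+1)+1 = (2*k+1)+1+1 := by omega
    rw [h, Nat.factorial_succ, Nat.factorial_succ, auxD, Nat.factorial_succ, pow_succ]
    push_cast
    push_cast at ih
    linear_combination (2*(k:ℝ)+3) * (2*(k:ℝ)+2) * ih

/-- Series coefficients of the spherical Bessel function at `π`. -/
noncomputable def auxjc (m k : ℕ) : ℝ :=
  (-1)^k * π^(m+2*k) / (2^k * (k.factorial : ℝ) * auxD (m+k))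

noncomputable def auxj (m : ℕ) : ℝ := ∑' k, auxjc m k

lemma auxjc_abs_le (m k : ℕ) :
    |auxjc m k| ≤ π^m * ((π^2/2)^k / (k.factorial : ℝ)) := by
  have hfac : (0:ℝ) < (k.factorial : ℝ) := by exact_mod_cast k.factorial_pos
  have hD := auxD_pos (m+k)
  have hD1 := one_le_auxD (m+k)
  have habs : |auxjc m k| = π^(m+2*k) / (2^k * (k.factorial : ℝ) * auxD (m+k)) := by
    rw [auxjc, abs_div, abs_mul, abs_pow, abs_neg, abs_one, one_pow, one_mul,
      abs_pow, abs_of_pos pi_pos, abs_of_pos (by positivity)]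
  rw [habs]
  have h1 : π^(m+2*k) / (2^k * (k.factorial : ℝ) * auxD (m+k))
      ≤ π^(m+2*k) / (2^k * (k.factorial : ℝ)) := by
    apply div_le_div_of_nonneg_left (by positivity) (by positivity)
    exact le_mul_of_one_le_right (by positivity) hD1
  refine h1.trans (le_of_eq ?_)
  rw [pow_add, pow_mul, div_pow]
  field_simp

noncomputable def auxM : ℝ := ∑' k : ℕ, ((π^2/2)^k / (k.factorial : ℝ))

lemma auxM_summable : Summable (fun k : ℕ => ((π^2/2)^k / (k.factorial : ℝ))) :=
  Real.summable_pow_div_factorial _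

lemma auxM_nonneg : 0 ≤ auxM :=
  tsum_nonneg fun k => by positivity

lemma auxjc_summable (m : ℕ) : Summable (auxjc m) := by
  apply Summable.of_norm_bounded (auxM_summable.mul_left (π^m))
  intro k
  simpa [mul_div_assoc] using auxjc_abs_le m k

lemma auxj_abs_le (m : ℕ) : |auxj m| ≤ π^m * auxM := by
  have h1 : Summable (fun k => ‖auxjc m k‖) := by
    apply Summable.of_nonneg_of_le (fun k => norm_nonneg _)
      (fun k => (auxjc_abs_le m k))
    exact auxM_summable.mul_left (π^m)
  calc |auxj m| ≤ ∑' k, ‖auxjc m k‖ := norm_tsum_le_tsum_norm h1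
    _ ≤ ∑' k, π^m * ((π^2/2)^k / (k.factorial : ℝ)) :=
        Summable.tsum_le_tsum (fun k => auxjc_abs_le m k) h1 (auxM_summable.mul_left (π^m))
    _ = π^m * auxM := by rw [tsum_mul_left, auxM]

lemma auxj_rec (m : ℕ) : auxj (m+2) = (2*(m:ℝ)+3)/π * auxj (m+1) - auxj m := by
  have hpi := pi_ne_zero
  have key : ∀ k : ℕ,
      (2*(m:ℝ)+3)/π * auxjc (m+1) (k+1) - auxjc m (k+1) = auxjc (m+2) k := by
    intro k
    have hfac : ((k+1).factorial : ℝ) = ((k:ℝ)+1) * (k.factorial : ℝ) := by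
      rw [Nat.factorial_succ]; push_cast; ring
    have hidx1 : m+1+(k+1) = (m+k+1)+1 := by omega
    have hidx2 : m+(k+1) = m+k+1 := by omega
    have hidx3 : m+2+k = (m+k+1)+1 := by omega
    have hD : auxD ((m+k+1)+1) = (2*((m:ℝ)+(k:ℝ)+1)+3) * auxD (m+k+1) := by
      rw [auxD]; push_cast; ring_nf
    have hfacpos : (0:ℝ) < (k.factorial : ℝ) := by exact_mod_cast k.factorial_pos
    have hDpos := auxD_pos (m+k+1)
    rw [auxjc, auxjc, auxjc, hidx1, hidx2, hidx3, hD, hfac]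
    have hp1 : π^(m+1+2*(k+1)) = π^(m+2*k) * π^3 := by
      rw [show m+1+2*(k+1) = (m+2*k)+3 from by omega, pow_add]
    have hp2 : π^(m+2*(k+1)) = π^(m+2*k) * π^2 := by
      rw [show m+2*(k+1) = (m+2*k)+2 from by omega, pow_add]
    have hp3 : π^(m+2+2*k) = π^(m+2*k) * π^2 := by
      rw [show m+2+2*k = (m+2*k)+2 from by omega, pow_add]
    rw [hp1, hp2, hp3, pow_succ]
    have h2k : (0:ℝ) < 2^k := by positivity
    field_simp
    ring
  have key0 : (2*(m:ℝ)+3)/π * auxjc (m+1) 0 - auxjc m 0 = 0 := by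
    have hD : auxD (m+1) = (2*(m:ℝ)+3) * auxD m := by rw [auxD]
    have hDpos := auxD_pos m
    rw [auxjc, auxjc]
    simp only [Nat.add_zero, Nat.mul_zero, pow_zero, Nat.factorial_zero, Nat.cast_one]
    rw [hD, pow_succ]
    field_simp
    ring
  have hF : Summable (fun k => (2*(m:ℝ)+3)/π * auxjc (m+1) k - auxjc m k) :=
    ((auxjc_summable (m+1)).mul_left _).sub (auxjc_summable m)
  have h0 : auxj (m+2) = ∑' k : ℕ,
      ((2*(m:ℝ)+3)/π * auxjc (m+1) (k+1) - auxjc m (k+1)) := by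
    rw [auxj]
    congr 1
    funext k
    exact (key k).symm
  rw [h0, ← zero_add (∑' k : ℕ, ((2*(m:ℝ)+3)/π * auxjc (m+1) (k+1) - auxjc m (k+1))),
    ← key0, ← Summable.tsum_eq_zero_add hF,
    Summable.tsum_sub ((auxjc_summable (m+1)).mul_left _) (auxjc_summable m),
    tsum_mul_left]
  rfl

lemma auxj_zero : auxj 0 = 0 := by
  have h : ∀ k : ℕ, auxjc 0 k = (1/π) * ((-1)^k * π^(2*k+1) / ((2*k+1).factorial : ℝ)) := by
    intro k
    rw [auxjc, ← auxD_fac k]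
    have hfacpos : (0:ℝ) < (k.factorial : ℝ) := by exact_mod_cast k.factorial_pos
    have hDpos := auxD_pos k
    simp only [Nat.zero_add, zero_add]
    rw [pow_succ]
    have h2k : (0:ℝ) < 2^k := by positivity
    field_simp
  rw [auxj]
  simp_rw [h]
  rw [tsum_mul_left, ← Real.sin_eq_tsum, Real.sin_pi, mul_zero]

lemma auxj_one : auxj 1 = 1/π := by
  have hpi := pi_ne_zero
  have hsinsum : Summable (fun n : ℕ => (-1)^n * π^(2*n+1) / ((2*n+1).factorial : ℝ)) :=
    (Real.hasSum_sin π).summable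
  have hcossum : Summable (fun n : ℕ => (-1)^n * π^(2*n) / ((2*n).factorial : ℝ)) :=
    (Real.hasSum_cos π).summable
  set A : ℕ → ℝ := fun k => (-1)^k * π^(2*k+2) / ((2*k+2).factorial : ℝ) with hA
  set B : ℕ → ℝ := fun k => (-1)^k * π^(2*k+2) / ((2*k+3).factorial : ℝ) with hB
  have hAabs : ∀ k, |A k| ≤ π^2 * ((π^2)^k / (k.factorial : ℝ)) := by
    intro k
    have h1 : (k.factorial : ℝ) ≤ ((2*k+2).factorial : ℝ) := by
      exact_mod_cast Nat.factorial_le (by omega)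
    have hk : (0:ℝ) < (k.factorial : ℝ) := by exact_mod_cast k.factorial_pos
    have : |A k| = π^(2*k+2) / ((2*k+2).factorial : ℝ) := by
      rw [hA, abs_div, abs_mul, abs_pow, abs_neg, abs_one, one_pow, one_mul,
        abs_pow, abs_of_pos pi_pos, abs_of_pos (by exact_mod_cast (2*k+2).factorial_pos)]
    rw [this, pow_add, pow_mul]
    calc (π^2)^k * π^2 / ((2*k+2).factorial : ℝ) ≤ (π^2)^k * π^2 / (k.factorial : ℝ) :=
          div_le_div_of_nonneg_left (by positivity) hk h1
      _ = π^2 * ((π^2)^k / (k.factorial : ℝ)) := by ring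
  have hBabs : ∀ k, |B k| ≤ π^2 * ((π^2)^k / (k.factorial : ℝ)) := by
    intro k
    have h1 : (k.factorial : ℝ) ≤ ((2*k+3).factorial : ℝ) := by
      exact_mod_cast Nat.factorial_le (by omega)
    have hk : (0:ℝ) < (k.factorial : ℝ) := by exact_mod_cast k.factorial_pos
    have : |B k| = π^(2*k+2) / ((2*k+3).factorial : ℝ) := by
      rw [hB, abs_div, abs_mul, abs_pow, abs_neg, abs_one, one_pow, one_mul,
        abs_pow, abs_of_pos pi_pos, abs_of_pos (by exact_mod_cast (2*k+3).factorial_pos)]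
    rw [this, pow_add, pow_mul]
    calc (π^2)^k * π^2 / ((2*k+3).factorial : ℝ) ≤ (π^2)^k * π^2 / (k.factorial : ℝ) :=
          div_le_div_of_nonneg_left (by positivity) hk h1
      _ = π^2 * ((π^2)^k / (k.factorial : ℝ)) := by ring
  have hgsum : Summable (fun k : ℕ => π^2 * ((π^2)^k / (k.factorial : ℝ))) :=
    (Real.summable_pow_div_factorial (π^2)).mul_left (π^2)
  have hAsum : Summable A := Summable.of_norm_bounded hgsum hAabs
  have hBsum : Summable B := Summable.of_norm_bounded hgsum hBabs
  have hAval : ∑' k, A k = 2 := by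
    have hpeel := Summable.tsum_eq_zero_add hcossum
    rw [← Real.cos_eq_tsum, Real.cos_pi] at hpeel
    have h2 : (fun k : ℕ => (-1)^(k+1) * π^(2*(k+1)) / ((2*(k+1)).factorial : ℝ))
        = fun k => -(A k) := by
      funext k
      have h1 : 2*(k+1) = 2*k+2 := by omega
      rw [h1, hA, pow_succ]
      ring
    simp only [Nat.mul_zero, pow_zero, Nat.factorial_zero, Nat.cast_one] at hpeel
    rw [h2, tsum_neg] at hpeel
    norm_num at hpeel
    linarith
  have hBval : ∑' k, B k = 1 := by
    have hpeel := Summable.tsum_eq_zero_add hsinsum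
    rw [← Real.sin_eq_tsum, Real.sin_pi] at hpeel
    have h2 : (fun k : ℕ => (-1)^(k+1) * π^(2*(k+1)+1) / ((2*(k+1)+1).factorial : ℝ))
        = fun k => -(π * B k) := by
      funext k
      have h1 : 2*(k+1)+1 = 2*k+3 := by omega
      rw [h1, hB]
      have hp : π^(2*k+3) = π * π^(2*k+2) := by rw [← pow_succ']
      rw [hp, pow_succ]
      ring
    simp only [Nat.mul_zero, pow_zero, Nat.factorial_zero, Nat.cast_one, pow_one] at hpeel
    rw [h2, tsum_neg, tsum_mul_left] at hpeel
    have hmul : π * ∑' k, B k = π := by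
      norm_num at hpeel
      linarith
    have := mul_left_cancel₀ hpi (by rw [hmul, mul_one] : π * ∑' k, B k = π * 1)
    exact this
  -- now express auxjc 1 k in terms of A and B
  have hterm : ∀ k : ℕ, auxjc 1 k = (1/π) * (A k - B k) := by
    intro k
    have hDfac := auxD_fac (k+1)
    have h1 : 2*(k+1)+1 = 2*k+3 := by omega
    rw [h1] at hDfac
    have hf3 : ((2*k+3).factorial : ℝ) = (2*(k:ℝ)+3) * ((2*k+2).factorial : ℝ) := by
      have h4 : 2*k+3 = (2*k+2)+1 := by omega
      rw [h4, Nat.factorial_succ]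
      push_cast; ring
    have hfk1 : ((k+1).factorial : ℝ) = ((k:ℝ)+1) * (k.factorial : ℝ) := by
      rw [Nat.factorial_succ]; push_cast; ring
    have hfacpos : (0:ℝ) < (k.factorial : ℝ) := by exact_mod_cast k.factorial_pos
    have hf2pos : (0:ℝ) < ((2*k+2).factorial : ℝ) := by exact_mod_cast (2*k+2).factorial_pos
    have hf3pos : (0:ℝ) < ((2*k+3).factorial : ℝ) := by exact_mod_cast (2*k+3).factorial_pos
    have hDpos := auxD_pos (k+1)
    have h2k : (0:ℝ) < 2^k := by positivity
    have hAB : A k - B k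
        = (-1)^k * π^(2*k+2) * (2*(k:ℝ)+2) / ((2*k+3).factorial : ℝ) := by
      simp only [hA, hB]
      rw [hf3]
      field_simp
      ring
    have hDval : auxD (k+1)
        = ((2*k+3).factorial : ℝ) / (2^(k+1) * ((k+1).factorial : ℝ)) := by
      rw [eq_div_iff (by positivity)]
      linear_combination hDfac
    have hidx : 1+k = k+1 := by omega
    rw [auxjc, hidx, hDval, hAB, hfk1, hf3]
    rw [pow_succ]
    field_simp
    ring
  rw [auxj]
  simp_rw [hterm]
  rw [tsum_mul_left, Summable.tsum_sub hAsum hBsum, hAval, hBval]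
  norm_num

/-- `C n = π^(n+1) 2^n n! / (2n+1)!` -/
noncomputable def auxC (n : ℕ) : ℝ :=
  π^(n+1) * 2^n * (n.factorial : ℝ) / ((2*n+1).factorial : ℝ)

lemma auxC_pos (n : ℕ) : 0 < auxC n := by
  rw [auxC]
  have h1 : (0:ℝ) < (n.factorial : ℝ) := by exact_mod_cast n.factorial_pos
  have h2 : (0:ℝ) < ((2*n+1).factorial : ℝ) := by exact_mod_cast (2*n+1).factorial_pos
  positivity

lemma auxC_succ (n : ℕ) : auxC (n+1) = π/(2*(n:ℝ)+3) * auxC n := by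
  rw [auxC, auxC]
  have h1 : 2*(n+1)+1 = (2*n+1)+1+1 := by omega
  rw [h1, Nat.factorial_succ, Nat.factorial_succ, Nat.factorial_succ]
  have h2 : (0:ℝ) < ((2*n+1).factorial : ℝ) := by exact_mod_cast (2*n+1).factorial_pos
  have h3 : (0:ℝ) < (n.factorial : ℝ) := by exact_mod_cast n.factorial_pos
  push_cast
  rw [pow_succ, pow_succ]
  field_simp
  ring

lemma p_eq_aux : ∀ n : ℕ, p (n+1) (π^2) = auxC (n+1) * auxj n ∧
    p (n+2) (π^2) = auxC (n+2) * auxj (n+1) := by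
  intro n
  induction n with
  | zero =>
    constructor
    · show p 1 (π^2) = auxC 1 * auxj 0
      rw [auxj_zero, mul_zero]
      rfl
    · show p 2 (π^2) = auxC 2 * auxj 1
      rw [auxj_one, auxC]
      show π^2/15 = _
      norm_num [Nat.factorial]
      rw [pow_succ]
      field_simp
      ring
  | succ n ih =>
    obtain ⟨h1, h2⟩ := ih
    refine ⟨h2, ?_⟩
    show p (n+3) (π^2) = auxC (n+3) * auxj (n+2)
    have hdef : p (n+3) (π^2) =
        ((2*((n : ℝ)+3)-3) * p (n+2) (π^2) - (π^2 / (2*((n : ℝ)+3)-1)) * p (n+1) (π^2))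
          / (2*((n : ℝ)+3)+1) := rfl
    rw [hdef, h1, h2, auxj_rec n,
      show (2*((n:ℝ)+3)-3) = 2*(n:ℝ)+3 by ring,
      show (2*((n:ℝ)+3)-1) = 2*(n:ℝ)+5 by ring,
      show (2*((n:ℝ)+3)+1) = 2*(n:ℝ)+7 by ring]
    have hc2 : auxC (n+2) = π/(2*(n:ℝ)+5) * auxC (n+1) := by
      have := auxC_succ (n+1)
      push_cast at this
      convert this using 3
      ring
    have hc3 : auxC (n+3) = π/(2*(n:ℝ)+7) * auxC (n+2) := by
      have := auxC_succ (n+2)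
      push_cast at this
      convert this using 3
      ring
    rw [hc3, hc2]
    have hpi := pi_ne_zero
    have hn5 : (2*(n:ℝ)+5) ≠ 0 := by positivity
    have hn7 : (2*(n:ℝ)+7) ≠ 0 := by positivity
    field_simp [hn5, hn7]

/-- `∑_{n=2}^∞ p_n(π²)` converges and equals `1`. -/
theorem sum_p_pi_sq : HasSum (fun n : ℕ => p (n + 2) (π^2)) 1 := by
  have hpi := pi_ne_zero
  set f : ℕ → ℝ := fun n => p (n + 2) (π^2) with hfdef
  set g : ℕ → ℝ := fun i => auxC (i+1) * auxj (i+2) with hgdef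
  have hf : ∀ k, f k = auxC (k+2) * auxj (k+1) := fun k => (p_eq_aux (k+1)).1
  have htel : ∀ k, f k = g k - g (k+1) := by
    intro k
    rw [hf k, hgdef]
    simp only
    have hc : auxC (k+2) = π/(2*(k:ℝ)+5) * auxC (k+1) := by
      have := auxC_succ (k+1)
      push_cast at this
      convert this using 3
      ring
    have hj : auxj (k+3) = (2*(k:ℝ)+5)/π * auxj (k+2) - auxj (k+1) := by
      have := auxj_rec (k+1)
      push_cast at this
      convert this using 2 <;> ring_nf
    rw [hj, hc]
    have hn5 : (2*(k:ℝ)+5) ≠ 0 := by positivity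
    field_simp
    ring
  have hg0 : g 0 = 1 := by
    rw [hgdef]
    simp only
    have hj2 : auxj 2 = 3/π * auxj 1 - auxj 0 := by
      have := auxj_rec 0
      norm_num at this
      exact this
    rw [hj2, auxj_zero, auxj_one, auxC]
    norm_num [Nat.factorial]
    rw [pow_succ]
    field_simp
    ring
  -- bound sequence
  set w : ℕ → ℝ := fun k => auxC (k+2) * (π^(k+1) * auxM) with hwdef
  have hw_nonneg : ∀ k, 0 ≤ w k := by
    intro k
    have := auxC_pos (k+2)
    have := auxM_nonneg
    positivity
  have hw_succ : ∀ k, w (k+1) = π^2/(2*(k:ℝ)+7) * w k := by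
    intro k
    rw [hwdef]
    simp only
    have hc : auxC (k+3) = π/(2*(k:ℝ)+7) * auxC (k+2) := by
      have := auxC_succ (k+2)
      push_cast at this
      convert this using 3
      ring
    rw [hc, pow_succ]
    have hn7 : (2*(k:ℝ)+7) ≠ 0 := by positivity
    field_simp
  have hpisq : π^2 ≤ 16 := by nlinarith [pi_le_four, pi_pos]
  have hwsum : Summable w := by
    apply summable_of_ratio_norm_eventually_le (r := 1/2) (by norm_num)
    filter_upwards [Filter.eventually_ge_atTop 13] with k hk
    rw [Real.norm_eq_abs, Real.norm_eq_abs, abs_of_nonneg (hw_nonneg _),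
      abs_of_nonneg (hw_nonneg _), hw_succ k]
    have hkR : (13:ℝ) ≤ (k:ℝ) := by exact_mod_cast hk
    have hn7 : (0:ℝ) < 2*(k:ℝ)+7 := by positivity
    have hr : π^2/(2*(k:ℝ)+7) ≤ 1/2 := by
      rw [div_le_div_iff₀ hn7 (by norm_num)]
      nlinarith
    exact mul_le_mul_of_nonneg_right hr (hw_nonneg k)
  have hfbound : ∀ k, ‖f k‖ ≤ w k := by
    intro k
    rw [hf k, Real.norm_eq_abs, abs_mul, abs_of_pos (auxC_pos (k+2)), hwdef]
    exact mul_le_mul_of_nonneg_left (auxj_abs_le (k+1)) (auxC_pos (k+2)).le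
  have hfsum : Summable (fun k => ‖f k‖) :=
    Summable.of_nonneg_of_le (fun k => norm_nonneg _) hfbound hwsum
  rw [hasSum_iff_tendsto_nat_of_summable_norm hfsum]
  have hsum_eq : ∀ N : ℕ, ∑ i ∈ Finset.range N, f i = g 0 - g N := by
    intro N
    calc ∑ i ∈ Finset.range N, f i = ∑ i ∈ Finset.range N, (g i - g (i+1)) := by
          apply Finset.sum_congr rfl
          intro i _
          exact htel i
      _ = g 0 - g N := Finset.sum_range_sub' g N
  -- show g tends to 0
  have hgle : ∀ n, ‖g n‖ ≤ auxC (n+1) * (π^(n+2) * auxM) := by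
    intro n
    rw [hgdef]
    simp only
    rw [Real.norm_eq_abs, abs_mul, abs_of_pos (auxC_pos (n+1))]
    exact mul_le_mul_of_nonneg_left (auxj_abs_le (n+2)) (auxC_pos (n+1)).le
  set u : ℕ → ℝ := fun n => auxC (n+1) * (π^(n+2) * auxM) with hudef
  have hw0 : Filter.Tendsto w Filter.atTop (nhds 0) := hwsum.tendsto_atTop_zero
  have huw : ∀ n, u (n+1) = π^2 * w n := by
    intro n
    rw [hudef, hwdef]
    simp only
    rw [pow_succ]
    ring
  have hu0 : Filter.Tendsto u Filter.atTop (nhds 0) := by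
    rw [← Filter.tendsto_add_atTop_iff_nat 1]
    have : (fun n => u (n+1)) = fun n => π^2 * w n := funext huw
    rw [this]
    have := hw0.const_mul (π^2)
    simpa using this
  have hg0' : Filter.Tendsto g Filter.atTop (nhds 0) :=
    squeeze_zero_norm hgle hu0
  have : Filter.Tendsto (fun N => g 0 - g N) Filter.atTop (nhds (g 0 - 0)) :=
    Filter.Tendsto.sub tendsto_const_nhds hg0'
  rw [hg0, sub_zero] at this
  have heq : (fun N => ∑ i ∈ Finset.range N, f i) = fun N => g 0 - g N := funext hsum_eq
  rw [heq, hg0]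
  exact this
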